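/- Let n ≥ 2 and V_n(M), V_n(R) be the truncated polynomial module and ring as above. If V_n(M) is σ̄-rigid as a right V_n(R)-module, then M is σ-rigid as a right R-module. -/

import Mathlib

open MulOpposite Finset

/-- If the truncated polynomial module `Vₙ(M) = M[x]/M[x](xⁿ)` is `σ̄`-rigid as a right
`Vₙ(R) = R[x]/(xⁿ)`-module, then `M` is `σ`-rigid. -/
theorem sigma_rigid_of_Vn {R M : Type*} [Ring R] [AddCommGroup M] [Module Rᵐᵒᵖ M]
    (σ : R →+* R) (n : ℕ) (hn : 2 ≤ n)
    (hVn : ∀ (U : ℕ → M) (A : ℕ → R),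
        (∀ k < n,
          ∑ ij ∈ antidiagonal k,
            op (σ (A ij.2)) • (∑ pq ∈ antidiagonal ij.1, op (A pq.2) • U pq.1) = 0) →
        ∀ k < n, ∑ ij ∈ antidiagonal k, op (A ij.2) • U ij.1 = 0) :
    ∀ (m : M) (a : R), op (σ a) • (op a • m) = 0 → op a • m = 0 := by
  intro m a h
  classical
  set U : ℕ → M := fun k => if k = 0 then m else 0 with hU
  set A : ℕ → R := fun k => if k = 0 then a else 0 with hA
  have inner : ∀ i, ∑ pq ∈ antidiagonal i, op (A pq.2) • U pq.1
      = if i = 0 then op a • m else 0 := by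
    intro i
    rcases Nat.eq_zero_or_pos i with hi | hi
    · subst hi; simp [U, A]
    · rw [if_neg hi.ne']
      apply Finset.sum_eq_zero
      intro pq hpq
      rw [Finset.HasAntidiagonal.mem_antidiagonal] at hpq
      rcases Nat.eq_zero_or_pos pq.2 with h2 | h2
      · have h1 : pq.1 = i := by omega
        simp [U, h1, hi.ne']
      · simp [A, h2.ne']
  have key := hVn U A ?_ 0 (by omega)
  · simpa [U, A] using key
  · intro k hk
    apply Finset.sum_eq_zero
    intro ij hij
    rw [Finset.HasAntidiagonal.mem_antidiagonal] at hij
    rw [inner]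
    rcases eq_or_ne ij.1 0 with h1 | h1
    · rw [if_pos h1]
      rcases eq_or_ne ij.2 0 with h2 | h2
      · simp [A, h2, h]
      · simp [A, h2]
    · simp [h1]
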